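/- Let A be Metzler and J nonnegative, T̄ > 0. Suppose there exist a differentiable function ζ : [0, T̄] → ℝ^n with ζ(T̄) entrywise strictly positive and ε > 0 such that ζ(τ)ᵀA − ζ'(τ)ᵀ ≤ 0 componentwise for all τ ∈ [0, T̄], and ζ(T̄)ᵀJ − ζ(0)ᵀ + ε·𝟙ᵀ ≤ 0 componentwise. Then λ := ζ(T̄) satisfies λᵀ(J·exp(A·T̄) − I) < 0 componentwise. -/

import Mathlib

open Matrix NormedSpace

open Nat

-- entry nonneg for entrywise nonneg matrix
lemma exp_entry_nonneg {n : ℕ} (M : Matrix (Fin n) (Fin n) ℝ) (hM : ∀ i j, 0 ≤ M i j)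
    (i j : Fin n) : 0 ≤ exp M i j := by
  letI : SeminormedRing (Matrix (Fin n) (Fin n) ℝ) := Matrix.linftyOpSemiNormedRing
  letI : NormedRing (Matrix (Fin n) (Fin n) ℝ) := Matrix.linftyOpNormedRing
  letI : NormedAlgebra ℝ (Matrix (Fin n) (Fin n) ℝ) := Matrix.linftyOpNormedAlgebra
  have hs : HasSum (fun k : ℕ => ((k ! : ℝ)⁻¹) • M ^ k) (exp M) := exp_series_hasSum_exp' M
  have hs2 : HasSum (fun k : ℕ => (((k ! : ℝ)⁻¹) • M ^ k) i j) (exp M i j) := by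
    have := (Pi.hasSum.mp hs i)
    exact Pi.hasSum.mp this j
  refine hasSum_le (f := fun _ : ℕ => (0:ℝ)) ?_ hasSum_zero hs2
  intro k
  have hpow : ∀ a b, 0 ≤ (M ^ k) a b := by
    induction k with
    | zero => intro a b; simp [pow_zero, Matrix.one_apply]; positivity
    | succ m ih =>
      intro a b
      rw [pow_succ, Matrix.mul_apply]
      exact Finset.sum_nonneg fun c _ => mul_nonneg (ih a c) (hM c b)
  simp only [Matrix.smul_apply, smul_eq_mul]
  exact mul_nonneg (by positivity) (hpow i j)

lemma exp_metzler_nonneg {n : ℕ} (M : Matrix (Fin n) (Fin n) ℝ)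
    (hM : ∀ i j, i ≠ j → 0 ≤ M i j) (i j : Fin n) : 0 ≤ exp M i j := by
  set c : ℝ := ∑ k, |M k k| with hc
  have hc0 : 0 ≤ c := Finset.sum_nonneg fun _ _ => abs_nonneg _
  set N : Matrix (Fin n) (Fin n) ℝ := M + c • (1 : Matrix (Fin n) (Fin n) ℝ) with hN
  have hNn : ∀ a b, 0 ≤ N a b := by
    intro a b
    by_cases h : a = b
    · subst h
      have h1 : |M a a| ≤ c := Finset.single_le_sum (f := fun k => |M k k|)
        (fun _ _ => abs_nonneg _) (Finset.mem_univ a)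
      simp [hN, Matrix.add_apply, Matrix.smul_apply, Matrix.one_apply]
      nlinarith [neg_abs_le (M a a)]
    · simp [hN, Matrix.add_apply, Matrix.smul_apply, Matrix.one_apply, h]
      exact hM a b h
  have hcomm : Commute N ((-c) • (1 : Matrix (Fin n) (Fin n) ℝ)) :=
    (Commute.one_right N).smul_right (-c)
  have hsplit : M = N + (-c) • (1 : Matrix (Fin n) (Fin n) ℝ) := by
    simp [hN, neg_smul]
  have hexp : exp M = exp N * exp ((-c) • (1 : Matrix (Fin n) (Fin n) ℝ)) := by
    rw [hsplit]
    exact Matrix.exp_add_of_commute N _ hcomm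
  have hdiag : (-c) • (1 : Matrix (Fin n) (Fin n) ℝ) = Matrix.diagonal (fun _ => -c) := by
    rw [Matrix.smul_one_eq_diagonal]
  have hexpdiag : exp ((-c) • (1 : Matrix (Fin n) (Fin n) ℝ))
      = Matrix.diagonal (fun _ => Real.exp (-c)) := by
    rw [hdiag, Matrix.exp_diagonal, Pi.exp_def]
    funext k
    rw [Real.exp_eq_exp_ℝ]
  rw [hexp, hexpdiag, Matrix.mul_diagonal]
  exact mul_nonneg (exp_entry_nonneg N hNn i j) (Real.exp_nonneg _)

lemma exp_col_sum_pos {n : ℕ} (M : Matrix (Fin n) (Fin n) ℝ)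
    (hM : ∀ i j, i ≠ j → 0 ≤ M i j) (j : Fin n) : 0 < ∑ k, exp M k j := by
  have hnn : ∀ k, 0 ≤ exp M k j := fun k => exp_metzler_nonneg M hM k j
  rcases (Finset.sum_nonneg fun k _ => hnn k).lt_or_eq with h | h
  · exact h
  exfalso
  have hzero : ∀ k, exp M k j = 0 := by
    have := (Finset.sum_eq_zero_iff_of_nonneg (fun k _ => hnn k)).mp h.symm
    exact fun k => this k (Finset.mem_univ k)
  have hinv : exp (-M) * exp M = 1 := by
    rw [← Matrix.exp_add_of_commute (-M) M ((Commute.refl M).neg_left), neg_add_cancel, exp_zero]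
  have := congrArg (fun P : Matrix (Fin n) (Fin n) ℝ => P j j) hinv
  simp only [Matrix.mul_apply, Matrix.one_apply_eq] at this
  rw [Finset.sum_eq_zero (fun k _ => by rw [hzero k, mul_zero])] at this
  exact zero_ne_one this

lemma exp_entry_hasDerivAt {n : ℕ} (A : Matrix (Fin n) (Fin n) ℝ) (i j : Fin n) (t : ℝ) :
    HasDerivAt (fun τ : ℝ => exp (τ • A) i j) ((A * exp (t • A)) i j) t := by
  letI : SeminormedRing (Matrix (Fin n) (Fin n) ℝ) := Matrix.linftyOpSemiNormedRing
  letI : NormedRing (Matrix (Fin n) (Fin n) ℝ) := Matrix.linftyOpNormedRing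
  letI : NormedAlgebra ℝ (Matrix (Fin n) (Fin n) ℝ) := Matrix.linftyOpNormedAlgebra
  have h : HasDerivAt (fun u : ℝ => exp (u • A)) (A * exp (t • A)) t :=
    hasDerivAt_exp_smul_const' (𝕂 := ℝ) A t
  have hlin : IsLinearMap ℝ (fun M : Matrix (Fin n) (Fin n) ℝ => M i j) :=
    ⟨fun _ _ => rfl, fun _ _ => rfl⟩
  let L : Matrix (Fin n) (Fin n) ℝ →ₗ[ℝ] ℝ := hlin.mk' _
  have hL : Continuous L := LinearMap.continuous_of_finiteDimensional L
  have := (ContinuousLinearMap.hasFDerivAt (⟨L, hL⟩ :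
    Matrix (Fin n) (Fin n) ℝ →L[ℝ] ℝ)).comp_hasDerivAt t h
  exact this


/-- The lifted (clock-dependent) constant dwell-time conditions imply the
finite-dimensional condition with `λ = ζ(T̄)`. -/
theorem lift_implies_constant_dwell_time (n : ℕ) (A J : Matrix (Fin n) (Fin n) ℝ)
    (hA : ∀ i j, i ≠ j → 0 ≤ A i j) (hJ : ∀ i j, 0 ≤ J i j)
    (T : ℝ) (hT : 0 < T)
    (ζ ζ' : ℝ → Fin n → ℝ)
    (hder : ∀ τ ∈ Set.Icc (0 : ℝ) T, HasDerivAt ζ (ζ' τ) τ)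
    (hpos : ∀ i, 0 < ζ T i)
    (ε : ℝ) (hε : 0 < ε)
    (hflow : ∀ τ ∈ Set.Icc (0 : ℝ) T, ∀ j, Matrix.vecMul (ζ τ) A j - ζ' τ j ≤ 0)
    (hjump : ∀ j, Matrix.vecMul (ζ T) J j - ζ 0 j + ε ≤ 0) :
    ∀ j, Matrix.vecMul (ζ T) (J * exp (T • A)) j < ζ T j := by
  intro j
  set E : ℝ → Matrix (Fin n) (Fin n) ℝ := fun s => exp (s • A) with hE
  have hMetz : ∀ s : ℝ, 0 ≤ s → ∀ p q : Fin n, p ≠ q → 0 ≤ (s • A) p q := by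
    intro s hs p q hpq
    simp only [Matrix.smul_apply, smul_eq_mul]
    exact mul_nonneg hs (hA p q hpq)
  have hEnn : ∀ s : ℝ, 0 ≤ s → ∀ a b, 0 ≤ E s a b := fun s hs a b =>
    exp_metzler_nonneg (s • A) (hMetz s hs) a b
  -- the auxiliary function and its derivative
  set f : ℝ → ℝ := fun τ => ∑ k, ζ τ k * E (T - τ) k j with hf
  set f' : ℝ → ℝ := fun τ =>
    ∑ k, (ζ' τ k * E (T - τ) k j + ζ τ k * ((A * E (T - τ)) k j * (-1))) with hf'
  have hfder : ∀ τ ∈ Set.Icc (0 : ℝ) T, HasDerivAt f (f' τ) τ := by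
    intro τ hτ
    apply HasDerivAt.fun_sum
    intro k _
    have h1 : HasDerivAt (fun τ => ζ τ k) (ζ' τ k) τ := (hasDerivAt_pi.mp (hder τ hτ)) k
    have h2 : HasDerivAt (fun τ : ℝ => E (T - τ) k j) ((A * E (T - τ)) k j * (-1)) τ := by
      have hin : HasDerivAt (fun τ : ℝ => T - τ) (-1) τ := by
        simpa using (hasDerivAt_id τ).const_sub T
      exact (exp_entry_hasDerivAt A k j (T - τ)).comp τ hin
    exact h1.mul h2
  -- the derivative is nonnegative on [0, T]
  have hf0 : ∀ τ ∈ Set.Icc (0 : ℝ) T, 0 ≤ f' τ := by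
    intro τ hτ
    have hTτ : 0 ≤ T - τ := by linarith [hτ.2]
    have hrw : f' τ = ∑ k, (ζ' τ k - Matrix.vecMul (ζ τ) A k) * E (T - τ) k j := by
      show (∑ k, (ζ' τ k * E (T - τ) k j + ζ τ k * ((A * E (T - τ)) k j * (-1)))) = _
      rw [Finset.sum_congr rfl (fun k _ => by ring_nf : ∀ k ∈ Finset.univ,
        ζ' τ k * E (T - τ) k j + ζ τ k * ((A * E (T - τ)) k j * (-1))
          = ζ' τ k * E (T - τ) k j - ζ τ k * (A * E (T - τ)) k j)]
      rw [Finset.sum_sub_distrib]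
      have : ∑ k, ζ τ k * (A * E (T - τ)) k j
          = ∑ k, Matrix.vecMul (ζ τ) A k * E (T - τ) k j := by
        have h1 : ∑ k, ζ τ k * (A * E (T - τ)) k j = Matrix.vecMul (ζ τ) (A * E (T - τ)) j := by
          simp [Matrix.vecMul, dotProduct]
        have h2 : Matrix.vecMul (ζ τ) (A * E (T - τ)) j
            = Matrix.vecMul (Matrix.vecMul (ζ τ) A) (E (T - τ)) j := by
          rw [Matrix.vecMul_vecMul]
        rw [h1, h2]
        simp [Matrix.vecMul, dotProduct]
      rw [this, ← Finset.sum_sub_distrib]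
      exact Finset.sum_congr rfl fun k _ => by ring
    rw [hrw]
    apply Finset.sum_nonneg
    intro k _
    have := hflow τ hτ k
    exact mul_nonneg (by linarith) (hEnn (T - τ) hTτ k j)
  -- monotonicity gives f 0 ≤ f T
  have hmono : MonotoneOn f (Set.Icc 0 T) := by
    apply monotoneOn_of_hasDerivWithinAt_nonneg (convex_Icc 0 T) (f' := f')
    · intro τ hτ
      exact (hfder τ hτ).continuousAt.continuousWithinAt
    · intro τ hτ
      rw [interior_Icc] at hτ
      exact (hfder τ (Set.mem_Icc_of_Ioo hτ)).hasDerivWithinAt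
    · intro τ hτ
      rw [interior_Icc] at hτ
      exact hf0 τ (Set.mem_Icc_of_Ioo hτ)
  have hle : f 0 ≤ f T :=
    hmono (Set.left_mem_Icc.mpr hT.le) (Set.right_mem_Icc.mpr hT.le) hT.le
  have hfT : f T = ζ T j := by
    rw [hf]
    simp only [sub_self, hE]
    rw [zero_smul, exp_zero]
    simp [Matrix.one_apply]
  have hf0' : f 0 = ∑ k, ζ 0 k * E T k j := by
    rw [hf]; simp
  -- final chain
  have hcol : 0 < ∑ k, E T k j :=
    exp_col_sum_pos (T • A) (hMetz T hT.le) j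
  have goal_eq : Matrix.vecMul (ζ T) (J * E T) j
      = ∑ k, Matrix.vecMul (ζ T) J k * E T k j := by
    rw [← Matrix.vecMul_vecMul]
    simp [Matrix.vecMul, dotProduct]
  rw [goal_eq]
  have step1 : ∑ k, Matrix.vecMul (ζ T) J k * E T k j
      ≤ ∑ k, (ζ 0 k - ε) * E T k j := by
    apply Finset.sum_le_sum
    intro k _
    exact mul_le_mul_of_nonneg_right (by linarith [hjump k]) (hEnn T hT.le k j)
  have step2 : ∑ k, (ζ 0 k - ε) * E T k j
      = (∑ k, ζ 0 k * E T k j) - ε * ∑ k, E T k j := by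
    rw [Finset.mul_sum, ← Finset.sum_sub_distrib]
    exact Finset.sum_congr rfl fun k _ => by ring
  have step3 : (∑ k, ζ 0 k * E T k j) - ε * ∑ k, E T k j < ∑ k, ζ 0 k * E T k j := by
    have : 0 < ε * ∑ k, E T k j := mul_pos hε hcol
    linarith
  calc ∑ k, Matrix.vecMul (ζ T) J k * E T k j
      ≤ ∑ k, (ζ 0 k - ε) * E T k j := step1
    _ = (∑ k, ζ 0 k * E T k j) - ε * ∑ k, E T k j := step2
    _ < ∑ k, ζ 0 k * E T k j := step3
    _ = f 0 := hf0'.symm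
    _ ≤ f T := hle
    _ = ζ T j := hfT
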